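/- If X₁ and X₂ are independent nonnegative regularly varying random variables, both with index α ≥ 0, then P(X₁ + X₂ > x) ∼ P(X₁ > x) + P(X₂ > x) as x → ∞, and X₁ + X₂ is regularly varying with index α. -/

import Mathlib

open MeasureTheory Filter Topology

/-- The tail function `x ↦ P(X > x)` as a real number. -/
noncomputable def tailP {Ω : Type*} [MeasurableSpace Ω] (μ : Measure Ω) (X : Ω → ℝ) (x : ℝ) : ℝ :=
  (μ {ω | x < X ω}).toReal

/-- A nonnegative random variable `X` is regularly varying with index `α ≥ 0` if
`P(X > x) > 0` for all `x > 0` and `P(X > qx)/P(X > x) → q^{-α}` for all `q > 0`. -/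
def RegVaryRV {Ω : Type*} [MeasurableSpace Ω] (μ : Measure Ω) (X : Ω → ℝ) (α : ℝ) : Prop :=
  (∀ x > 0, 0 < μ {ω | x < X ω}) ∧
  ∀ q > 0, Tendsto (fun x : ℝ => tailP μ X (q * x) / tailP μ X x) atTop (𝓝 (q ^ (-α)))

section aux
variable {Ω : Type*} [MeasurableSpace Ω] {μ : Measure Ω} [IsProbabilityMeasure μ] {X : Ω → ℝ}
  {x : ℝ}

omit [IsProbabilityMeasure μ] in
lemma tailP_nonneg (x : ℝ) : 0 ≤ tailP μ X x := ENNReal.toReal_nonneg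

lemma tailP_anti : Antitone (tailP μ X) := fun _ b hab =>
  ENNReal.toReal_le_toReal (measure_ne_top _ _) (measure_ne_top _ _) |>.mpr
    (measure_mono fun ω (h : b < X ω) => lt_of_le_of_lt hab h)

lemma tailP_tendsto_zero (hm : Measurable X) : Tendsto (tailP μ X) atTop (𝓝 0) := by
  have h : Tendsto (fun x : ℝ => μ {ω | x < X ω}) atTop (𝓝 (μ (⋂ x : ℝ, {ω | x < X ω}))) := by
    apply tendsto_measure_iInter_atTop
    · exact fun _ => (hm measurableSet_Ioi).nullMeasurableSet
    · exact fun a b hab ω (h : b < X ω) => lt_of_le_of_lt hab h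
    · exact ⟨0, measure_ne_top _ _⟩
  have hempty : (⋂ x : ℝ, {ω | x < X ω}) = ∅ := by
    ext ω; simp only [Set.mem_iInter, Set.mem_setOf_eq, Set.mem_empty_iff_false, iff_false]
    push_neg; exact ⟨X ω, le_rfl⟩
  rw [hempty, measure_empty] at h
  have := (ENNReal.tendsto_toReal (by simp)).comp h
  simp only [Function.comp_def, ENNReal.toReal_zero] at this
  exact this

lemma tailP_pos (hpos : 0 < μ {ω | x < X ω}) : 0 < tailP μ X x :=
  ENNReal.toReal_pos hpos.ne' (measure_ne_top _ _)

end aux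

lemma mediant_le_max {a b c d : ℝ} (hc : 0 < c) (hd : 0 < d) :
    (a + b) / (c + d) ≤ max (a / c) (b / d) := by
  rw [div_le_iff₀ (by positivity)]
  have h1 : a ≤ max (a / c) (b / d) * c := by
    calc a = a / c * c := (div_mul_cancel₀ a hc.ne').symm
    _ ≤ _ := mul_le_mul_of_nonneg_right (le_max_left _ _) hc.le
  have h2 : b ≤ max (a / c) (b / d) * d := by
    calc b = b / d * d := (div_mul_cancel₀ b hd.ne').symm
    _ ≤ _ := mul_le_mul_of_nonneg_right (le_max_right _ _) hd.le
  calc a + b ≤ _ + _ := add_le_add h1 h2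
  _ = _ := (mul_add _ _ _).symm

lemma min_le_mediant {a b c d : ℝ} (hc : 0 < c) (hd : 0 < d) :
    min (a / c) (b / d) ≤ (a + b) / (c + d) := by
  rw [le_div_iff₀ (by positivity)]
  have h1 : min (a / c) (b / d) * c ≤ a := by
    calc min (a / c) (b / d) * c ≤ a / c * c :=
      mul_le_mul_of_nonneg_right (min_le_left _ _) hc.le
    _ = a := div_mul_cancel₀ a hc.ne'
  have h2 : min (a / c) (b / d) * d ≤ b := by
    calc min (a / c) (b / d) * d ≤ b / d * d :=
      mul_le_mul_of_nonneg_right (min_le_right _ _) hd.le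
    _ = b := div_mul_cancel₀ b hd.ne'
  calc min (a / c) (b / d) * (c + d) = _ + _ := mul_add _ _ _
  _ ≤ a + b := add_le_add h1 h2

theorem stmt8 {Ω : Type*} [MeasurableSpace Ω] (μ : Measure Ω) [IsProbabilityMeasure μ]
    (X₁ X₂ : Ω → ℝ) (h1m : Measurable X₁) (h2m : Measurable X₂)
    (h10 : ∀ ω, 0 ≤ X₁ ω) (h20 : ∀ ω, 0 ≤ X₂ ω)
    (hind : ProbabilityTheory.IndepFun X₁ X₂ μ)
    (α : ℝ) (hα : 0 ≤ α) (hX₁ : RegVaryRV μ X₁ α) (hX₂ : RegVaryRV μ X₂ α) :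
    Tendsto (fun x : ℝ =>
        tailP μ (fun ω => X₁ ω + X₂ ω) x / (tailP μ X₁ x + tailP μ X₂ x)) atTop (𝓝 1) ∧
    RegVaryRV μ (fun ω => X₁ ω + X₂ ω) α := by
  set S : Ω → ℝ := fun ω => X₁ ω + X₂ ω with hS
  set T : ℝ → ℝ := tailP μ S with hT
  set f₁ : ℝ → ℝ := tailP μ X₁ with hf₁
  set f₂ : ℝ → ℝ := tailP μ X₂ with hf₂
  -- independence product rule
  have hind_mul : ∀ a b : ℝ, μ ({ω | a < X₁ ω} ∩ {ω | b < X₂ ω})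
      = μ {ω | a < X₁ ω} * μ {ω | b < X₂ ω} := fun a b =>
    hind.measure_inter_preimage_eq_mul (Set.Ioi a) (Set.Ioi b)
      measurableSet_Ioi measurableSet_Ioi
  have hind_mulR : ∀ a b : ℝ, (μ ({ω | a < X₁ ω} ∩ {ω | b < X₂ ω})).toReal
      = f₁ a * f₂ b := by
    intro a b; rw [hind_mul a b, ENNReal.toReal_mul]; rfl
  -- positivity facts
  have hf1pos : ∀ x > 0, 0 < f₁ x := fun x hx => tailP_pos (hX₁.1 x hx)
  have hf2pos : ∀ x > 0, 0 < f₂ x := fun x hx => tailP_pos (hX₂.1 x hx)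
  have hf1leT : ∀ x, f₁ x ≤ T x := fun x =>
    (ENNReal.toReal_le_toReal (measure_ne_top _ _) (measure_ne_top _ _)).mpr
      (measure_mono fun ω (h : x < X₁ ω) =>
        show x < X₁ ω + X₂ ω from lt_of_lt_of_le h (le_add_of_nonneg_right (h20 ω)))
  -- lower bound : f₁ x + f₂ x - f₁ x * f₂ x ≤ T x
  have hlower : ∀ x : ℝ, f₁ x + f₂ x - f₁ x * f₂ x ≤ T x := by
    intro x
    have hsub : ({ω | x < X₁ ω} ∪ {ω | x < X₂ ω}) ⊆ {ω | x < S ω} := by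
      rintro ω (h | h)
      · exact lt_of_lt_of_le h (le_add_of_nonneg_right (h20 ω))
      · exact lt_of_lt_of_le h (le_add_of_nonneg_left (h10 ω))
    have hui := measure_union_add_inter (μ := μ) {ω | x < X₁ ω}
      (show MeasurableSet {ω | x < X₂ ω} from h2m measurableSet_Ioi)
    have hui' : (μ ({ω | x < X₁ ω} ∪ {ω | x < X₂ ω})).toReal
        + (μ ({ω | x < X₁ ω} ∩ {ω | x < X₂ ω})).toReal = f₁ x + f₂ x := by
      rw [← ENNReal.toReal_add (measure_ne_top _ _) (measure_ne_top _ _), hui,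
        ENNReal.toReal_add (measure_ne_top _ _) (measure_ne_top _ _)]; rfl
    rw [hind_mulR x x] at hui'
    have hle : (μ ({ω | x < X₁ ω} ∪ {ω | x < X₂ ω})).toReal ≤ T x :=
      (ENNReal.toReal_le_toReal (measure_ne_top _ _) (measure_ne_top _ _)).mpr
        (measure_mono hsub)
    linarith
  -- upper bound with splitting parameter q ∈ (0,1)
  have hupper : ∀ q : ℝ, 0 < q → q < 1 → ∀ x : ℝ,
      T x ≤ f₁ (q * x) + f₂ (q * x) + f₁ ((1 - q) * x) * f₂ ((1 - q) * x) := by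
    intro q hq0 hq1 x
    have hsub : {ω | x < S ω} ⊆ ({ω | q * x < X₁ ω} ∪ {ω | q * x < X₂ ω})
        ∪ ({ω | (1 - q) * x < X₁ ω} ∩ {ω | (1 - q) * x < X₂ ω}) := by
      intro ω hω
      by_cases h1 : q * x < X₁ ω
      · exact Or.inl (Or.inl h1)
      by_cases h2 : q * x < X₂ ω
      · exact Or.inl (Or.inr h2)
      push_neg at h1 h2
      refine Or.inr ⟨?_, ?_⟩
      · show (1 - q) * x < X₁ ω
        have : x < X₁ ω + X₂ ω := hω
        nlinarith
      · show (1 - q) * x < X₂ ω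
        have : x < X₁ ω + X₂ ω := hω
        nlinarith
    have hmeas : μ {ω | x < S ω} ≤ μ ({ω | q * x < X₁ ω} ∪ {ω | q * x < X₂ ω})
        + μ ({ω | (1 - q) * x < X₁ ω} ∩ {ω | (1 - q) * x < X₂ ω}) :=
      (measure_mono hsub).trans (measure_union_le _ _)
    have hmeas2 : μ {ω | x < S ω} ≤ (μ {ω | q * x < X₁ ω} + μ {ω | q * x < X₂ ω})
        + μ ({ω | (1 - q) * x < X₁ ω} ∩ {ω | (1 - q) * x < X₂ ω}) :=
      hmeas.trans (add_le_add (measure_union_le _ _) le_rfl)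
    have := (ENNReal.toReal_le_toReal (measure_ne_top _ _)
      (by finiteness)).mpr hmeas2
    rw [ENNReal.toReal_add (by finiteness) (measure_ne_top _ _),
      ENNReal.toReal_add (measure_ne_top _ _) (measure_ne_top _ _),
      hind_mulR] at this
    exact this
  have hf2to0 : Tendsto f₂ atTop (𝓝 0) := tailP_tendsto_zero h2m
  have hf1to0 : Tendsto f₁ atTop (𝓝 0) := tailP_tendsto_zero h1m
  -- the main limit
  have hmain : Tendsto (fun x => T x / (f₁ x + f₂ x)) atTop (𝓝 1) := by
    rw [tendsto_order]
    constructor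
    · intro c hc
      filter_upwards [hf2to0.eventually_lt_const (show (0:ℝ) < 1 - c by linarith),
        eventually_gt_atTop 0] with x hx2 hxpos
      have hg : 0 < f₁ x + f₂ x := add_pos (hf1pos x hxpos) (hf2pos x hxpos)
      rw [lt_div_iff₀ hg]
      have h1 := hlower x
      have hf1le : f₁ x ≤ f₁ x + f₂ x := le_add_of_nonneg_right (tailP_nonneg x)
      have hf2nn : 0 ≤ f₂ x := tailP_nonneg x
      nlinarith [hf1pos x hxpos, hf2pos x hxpos]
    · intro c hc
      set mid : ℝ := (1 + c) / 2 with hmid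
      have hmid1 : 1 < mid := by rw [hmid]; linarith
      have hmidc : mid < c := by rw [hmid]; linarith
      -- choose q close to 1
      have hcont : ContinuousAt (fun p : ℝ => p ^ (-α)) 1 :=
        Real.continuousAt_rpow_const 1 (-α) (Or.inl one_ne_zero)
      have htends : Tendsto (fun p : ℝ => p ^ (-α)) (𝓝[<] (1:ℝ)) (𝓝 1) := by
        have := hcont.tendsto.mono_left (nhdsWithin_le_nhds (s := Set.Iio (1:ℝ)))
        simpa [Real.one_rpow] using this
      have hev1 : ∀ᶠ p in 𝓝[<] (1:ℝ), p ^ (-α) < mid := htends.eventually_lt_const hmid1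
      have hev2 : ∀ᶠ p in 𝓝[<] (1:ℝ), 0 < p :=
        (eventually_gt_nhds zero_lt_one).filter_mono nhdsWithin_le_nhds
      have hev3 : ∀ᶠ p in 𝓝[<] (1:ℝ), p < 1 := eventually_mem_nhdsWithin
      obtain ⟨q, hqα, hq0, hq1⟩ := (hev1.and (hev2.and hev3)).exists
      have hδ : 0 < 1 - q := by linarith
      have hA := hX₁.2 q hq0
      have hB := hX₂.2 q hq0
      have hmax : Tendsto (fun x => max (f₁ (q * x) / f₁ x) (f₂ (q * x) / f₂ x))
          atTop (𝓝 (q ^ (-α))) := by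
        simpa using hA.max hB
      have hCf : Tendsto (fun x => f₁ ((1 - q) * x)) atTop (𝓝 0) :=
        hf1to0.comp (Tendsto.const_mul_atTop hδ tendsto_id)
      have hC : Tendsto (fun x => f₁ ((1 - q) * x) * (f₂ ((1 - q) * x) / f₂ x))
          atTop (𝓝 0) := by
        simpa using hCf.mul (hX₂.2 (1 - q) hδ)
      filter_upwards [hmax.eventually_lt_const hqα, hC.eventually_lt_const
        (show (0:ℝ) < c - mid by linarith), eventually_gt_atTop 0] with x hmx hCx hxpos
      have hf1p := hf1pos x hxpos
      have hf2p := hf2pos x hxpos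
      have hg : 0 < f₁ x + f₂ x := add_pos hf1p hf2p
      have hub := hupper q hq0 hq1 x
      calc T x / (f₁ x + f₂ x)
          ≤ (f₁ (q * x) + f₂ (q * x) + f₁ ((1 - q) * x) * f₂ ((1 - q) * x))
            / (f₁ x + f₂ x) := by gcongr
        _ = (f₁ (q * x) + f₂ (q * x)) / (f₁ x + f₂ x)
            + (f₁ ((1 - q) * x) * f₂ ((1 - q) * x)) / (f₁ x + f₂ x) := add_div _ _ _
        _ ≤ max (f₁ (q * x) / f₁ x) (f₂ (q * x) / f₂ x)
            + f₁ ((1 - q) * x) * (f₂ ((1 - q) * x) / f₂ x) := by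
            refine add_le_add (mediant_le_max hf1p hf2p) ?_
            rw [mul_div_assoc]
            refine mul_le_mul_of_nonneg_left ?_ (tailP_nonneg _)
            apply div_le_div_of_nonneg_left (tailP_nonneg _) hf2p
            exact le_add_of_nonneg_left (tailP_nonneg x)
        _ < mid + (c - mid) := add_lt_add hmx hCx
        _ = c := by ring
  -- regular variation of the combined tail g = f₁ + f₂
  have hgratio : ∀ p : ℝ, 0 < p →
      Tendsto (fun x => (f₁ (p * x) + f₂ (p * x)) / (f₁ x + f₂ x)) atTop (𝓝 (p ^ (-α))) := by
    intro p hp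
    have hA := hX₁.2 p hp
    have hB := hX₂.2 p hp
    have hmin : Tendsto (fun x => min (f₁ (p * x) / f₁ x) (f₂ (p * x) / f₂ x))
        atTop (𝓝 (p ^ (-α))) := by simpa using hA.min hB
    have hmax : Tendsto (fun x => max (f₁ (p * x) / f₁ x) (f₂ (p * x) / f₂ x))
        atTop (𝓝 (p ^ (-α))) := by simpa using hA.max hB
    refine tendsto_of_tendsto_of_tendsto_of_le_of_le' hmin hmax ?_ ?_
    · filter_upwards [eventually_gt_atTop 0] with x hx
      exact min_le_mediant (hf1pos x hx) (hf2pos x hx)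
    · filter_upwards [eventually_gt_atTop 0] with x hx
      exact mediant_le_max (hf1pos x hx) (hf2pos x hx)
  refine ⟨hmain, ?_, ?_⟩
  · intro x hx
    exact lt_of_lt_of_le (hX₁.1 x hx)
      (measure_mono fun ω (h : x < X₁ ω) =>
        show x < X₁ ω + X₂ ω from lt_of_lt_of_le h (le_add_of_nonneg_right (h20 ω)))
  · intro p hp
    have hmul : Tendsto (fun x : ℝ => p * x) atTop atTop :=
      Tendsto.const_mul_atTop hp tendsto_id
    have hcomp : Tendsto (fun x => T (p * x) / (f₁ (p * x) + f₂ (p * x))) atTop (𝓝 1) :=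
      hmain.comp hmul
    have hinv : Tendsto (fun x => (f₁ x + f₂ x) / T x) atTop (𝓝 1) := by
      have := (hmain.inv₀ one_ne_zero)
      simpa [inv_div] using this
    have hfinal := (hcomp.mul (hgratio p hp)).mul hinv
    rw [show (1 : ℝ) * p ^ (-α) * 1 = p ^ (-α) by ring] at hfinal
    refine Tendsto.congr' ?_ hfinal
    filter_upwards [eventually_gt_atTop 0] with x hx
    have hpx : 0 < p * x := mul_pos hp hx
    have hg1 : (f₁ (p * x) + f₂ (p * x)) ≠ 0 :=
      (add_pos (hf1pos _ hpx) (hf2pos _ hpx)).ne'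
    have hg2 : (f₁ x + f₂ x) ≠ 0 := (add_pos (hf1pos _ hx) (hf2pos _ hx)).ne'
    have hT : T x ≠ 0 := (lt_of_lt_of_le (hf1pos x hx) (hf1leT x)).ne'
    field_simp
    exact (mul_div_cancel_left₀ _ hT).symm
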